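/- Let T be a stress-energy tensor on (N+1)-dimensional Minkowski space satisfying the dominant energy condition. Let V be a future-directed timelike vector normalized so that η(V,V) = -1, and let D be a (not necessarily symmetric) bilinear form on ℝ^{N+1} (identified with an (N+1)×(N+1) real matrix via D(x,y) = xᵀDy) with D(V,·) = 0 and D(·,V) = 0. Then the full contraction T^{μν}D_{μν} := ∑_{μ,ν}(ηTη)_{μν} D_{μν} satisfies |T^{μν}D_{μν}| ≤ N² · √(D_{αβ}D^{αβ}) · T(V,V), where D_{αβ}D^{αβ} := ∑_{α,β} D_{αβ}(ηDη)_{αβ} (this scalar is nonnegative because both contractions of D with the timelike vector V vanish). -/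

import Mathlib

open Matrix

/-- The Minkowski metric `diag(-1,1,…,1)` on `ℝ^{N+1}`. -/
noncomputable def eta (N : ℕ) : Matrix (Fin (N+1)) (Fin (N+1)) ℝ :=
  Matrix.diagonal (fun i => if i = 0 then (-1 : ℝ) else 1)

/-- The Minkowski bilinear form `η(x,y) = -x₀y₀ + ∑ᵢ xᵢyᵢ`. -/
noncomputable def mdot {N : ℕ} (x y : Fin (N+1) → ℝ) : ℝ :=
  x ⬝ᵥ (eta N).mulVec y

/-- Future-directed timelike: `η(v,v) < 0` and `v₀ > 0`. -/
def FDTimelike {N : ℕ} (v : Fin (N+1) → ℝ) : Prop :=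
  mdot v v < 0 ∧ 0 < v 0

/-- Future-directed lightlike: `v ≠ 0`, `η(v,v) = 0` and `v₀ > 0`. -/
def FDLightlike {N : ℕ} (v : Fin (N+1) → ℝ) : Prop :=
  v ≠ 0 ∧ mdot v v = 0 ∧ 0 < v 0

/-- Future-directed causal: future-directed timelike or lightlike. -/
def FDCausal {N : ℕ} (v : Fin (N+1) → ℝ) : Prop :=
  FDTimelike v ∨ FDLightlike v

/-- The bilinear form associated to a matrix: `T(v,w) = vᵀ T w`. -/
noncomputable def Tbil {N : ℕ} (T : Matrix (Fin (N+1)) (Fin (N+1)) ℝ)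
    (v w : Fin (N+1) → ℝ) : ℝ :=
  v ⬝ᵥ T.mulVec w

/-- The endomorphism associated to a stress-energy tensor: `u(v) = -ηTv`. -/
noncomputable def endo {N : ℕ} (T : Matrix (Fin (N+1)) (Fin (N+1)) ℝ)
    (v : Fin (N+1) → ℝ) : Fin (N+1) → ℝ :=
  -((eta N).mulVec (T.mulVec v))

/-- The dominant energy condition: every future-directed causal vector is
sent by the associated endomorphism to a future-directed causal vector or zero. -/
def DEC {N : ℕ} (T : Matrix (Fin (N+1)) (Fin (N+1)) ℝ) : Prop :=
  ∀ v : Fin (N+1) → ℝ, FDCausal v → FDCausal (endo T v) ∨ endo T v = 0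

lemma eta_transpose (N : ℕ) : (eta N)ᵀ = eta N := by
  simp [eta, Matrix.diagonal_transpose]

lemma eta_mul_eta (N : ℕ) : eta N * eta N = 1 := by
  rw [eta, Matrix.diagonal_mul_diagonal]
  ext i j
  rcases eq_or_ne i j with rfl | hij
  · by_cases h : i = 0 <;> simp [h, Matrix.diagonal_apply_eq, Matrix.one_apply]
  · simp [Matrix.diagonal_apply_ne _ hij, Matrix.one_apply, hij]

lemma eta_mulVec {N : ℕ} (y : Fin (N+1) → ℝ) (i : Fin (N+1)) :
    (eta N).mulVec y i = (if i = 0 then -1 else 1) * y i := by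
  simp [eta, Matrix.mulVec_diagonal]

lemma mdot_expand {N : ℕ} (x y : Fin (N+1) → ℝ) :
    mdot x y = -(x 0 * y 0) + ∑ i : Fin N, x i.succ * y i.succ := by
  simp only [mdot, dotProduct]
  rw [Fin.sum_univ_succ]
  simp [eta_mulVec, Fin.succ_ne_zero]

lemma mdot_symm {N : ℕ} (x y : Fin (N+1) → ℝ) : mdot x y = mdot y x := by
  simp only [mdot_expand]; rw [mul_comm (x 0)]
  congr 1; exact Finset.sum_congr rfl (fun i _ => mul_comm _ _)

lemma mdot_add_left {N : ℕ} (x y z : Fin (N+1) → ℝ) :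
    mdot (x + y) z = mdot x z + mdot y z := by
  simp [mdot, add_dotProduct]

lemma mdot_add_right {N : ℕ} (x y z : Fin (N+1) → ℝ) :
    mdot x (y + z) = mdot x y + mdot x z := by
  simp [mdot, Matrix.mulVec_add, dotProduct_add]

lemma mdot_smul_left {N : ℕ} (a : ℝ) (x z : Fin (N+1) → ℝ) :
    mdot (a • x) z = a * mdot x z := by
  simp [mdot, smul_dotProduct]

lemma mdot_smul_right {N : ℕ} (a : ℝ) (x z : Fin (N+1) → ℝ) :
    mdot x (a • z) = a * mdot x z := by
  simp [mdot, Matrix.mulVec_smul, dotProduct_smul]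

lemma FDCausal.nonneg0 {N : ℕ} {v : Fin (N+1) → ℝ} (h : FDCausal v) : 0 < v 0 := by
  rcases h with h | h
  · exact h.2
  · exact h.2.2

lemma FDCausal.mdot_nonpos {N : ℕ} {v : Fin (N+1) → ℝ} (h : FDCausal v) : mdot v v ≤ 0 := by
  rcases h with h | h
  · exact le_of_lt h.1
  · exact le_of_eq h.2.1

lemma FDCausal.spatial_le {N : ℕ} {v : Fin (N+1) → ℝ} (h : FDCausal v) :
    ∑ i : Fin N, v i.succ * v i.succ ≤ v 0 * v 0 := by
  have := h.mdot_nonpos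
  rw [mdot_expand] at this; linarith

/-- Cauchy-Schwarz for spatial parts + causal ⇒ mdot of two causal vectors ≤ 0. -/
lemma mdot_nonpos_of_causal {N : ℕ} {x y : Fin (N+1) → ℝ}
    (hx : FDCausal x) (hy : FDCausal y) : mdot x y ≤ 0 := by
  rw [mdot_expand]
  have hcs : (∑ i : Fin N, x i.succ * y i.succ)^2 ≤
      (∑ i : Fin N, x i.succ * x i.succ) * (∑ i : Fin N, y i.succ * y i.succ) := by
    simpa [sq] using Finset.sum_mul_sq_le_sq_mul_sq Finset.univ
      (fun i : Fin N => x i.succ) (fun i : Fin N => y i.succ)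
  have h1 := hx.spatial_le
  have h2 := hy.spatial_le
  have hx0 := hx.nonneg0
  have hy0 := hy.nonneg0
  have hxx : (0:ℝ) ≤ ∑ i : Fin N, x i.succ * x i.succ :=
    Finset.sum_nonneg (fun i _ => mul_self_nonneg _)
  have hyy : (0:ℝ) ≤ ∑ i : Fin N, y i.succ * y i.succ :=
    Finset.sum_nonneg (fun i _ => mul_self_nonneg _)
  nlinarith [mul_pos hx0 hy0, sq_nonneg (∑ i : Fin N, x i.succ * y i.succ)]

lemma Tbil_eq_neg_mdot {N : ℕ} (T : Matrix (Fin (N+1)) (Fin (N+1)) ℝ)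
    (x y : Fin (N+1) → ℝ) : Tbil T x y = -(mdot x (endo T y)) := by
  simp only [Tbil, endo, mdot, Matrix.mulVec_neg, dotProduct_neg, neg_neg,
    Matrix.mulVec_mulVec]
  rw [← Matrix.mul_assoc, eta_mul_eta, Matrix.one_mul]

lemma mdot_zero_right {N : ℕ} (x : Fin (N+1) → ℝ) : mdot x 0 = 0 := by
  simp [mdot, Matrix.mulVec_zero]

/-- DEC implies `T(x,y) ≥ 0` for future-directed causal `x, y`. -/
lemma Tbil_nonneg_of_causal {N : ℕ} {T : Matrix (Fin (N+1)) (Fin (N+1)) ℝ}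
    (hdec : DEC T) {x y : Fin (N+1) → ℝ} (hx : FDCausal x) (hy : FDCausal y) :
    0 ≤ Tbil T x y := by
  rw [Tbil_eq_neg_mdot]
  rcases hdec y hy with h | h
  · have := mdot_nonpos_of_causal hx h
    linarith
  · rw [h, mdot_zero_right]; simp

/-- A causal-normed vector with negative Minkowski product with a FD timelike vector
is future-directed causal. -/
lemma fdcausal_of_mdot_neg {N : ℕ} {V z : Fin (N+1) → ℝ} (hV : FDTimelike V)
    (hz : mdot z z ≤ 0) (hVz : mdot V z < 0) : FDCausal z := by
  have hV0 : 0 < V 0 := hV.2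
  have hVs : ∑ i : Fin N, V i.succ * V i.succ ≤ V 0 * V 0 := by
    have := hV.1; rw [mdot_expand] at this; linarith
  -- first, z 0 > 0
  have hz0 : 0 < z 0 := by
    by_contra hle
    push_neg at hle
    have hzs : ∑ i : Fin N, z i.succ * z i.succ ≤ z 0 * z 0 := by
      rw [mdot_expand] at hz; linarith
    have hcs : (∑ i : Fin N, V i.succ * z i.succ)^2 ≤
        (∑ i : Fin N, V i.succ * V i.succ) * (∑ i : Fin N, z i.succ * z i.succ) := by
      simpa [sq] using Finset.sum_mul_sq_le_sq_mul_sq Finset.univ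
        (fun i : Fin N => V i.succ) (fun i : Fin N => z i.succ)
    have hVV : (0:ℝ) ≤ ∑ i : Fin N, V i.succ * V i.succ :=
      Finset.sum_nonneg (fun i _ => mul_self_nonneg _)
    have hzz : (0:ℝ) ≤ ∑ i : Fin N, z i.succ * z i.succ :=
      Finset.sum_nonneg (fun i _ => mul_self_nonneg _)
    rw [mdot_expand] at hVz
    -- -(V0 z0) ≥ 0 since z0 ≤ 0, and the spatial part ≥ -|Vs||zs| ≥ V0 z0
    nlinarith [sq_nonneg (∑ i : Fin N, V i.succ * z i.succ), mul_nonneg (le_of_lt hV0) (neg_nonneg.mpr hle)]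
  rcases lt_or_eq_of_le hz with hlt | heq
  · exact Or.inl ⟨hlt, hz0⟩
  · refine Or.inr ⟨?_, heq ▸ rfl, hz0⟩
    intro h0
    rw [h0] at hz0
    simp at hz0

lemma Tbil_expand {N : ℕ} (T : Matrix (Fin (N+1)) (Fin (N+1)) ℝ)
    (V x y : Fin (N+1) → ℝ) (a b : ℝ) :
    Tbil T (V + a • x) (V + b • y) =
      Tbil T V V + b * Tbil T V y + a * Tbil T x V + a * b * Tbil T x y := by
  simp only [Tbil, Matrix.mulVec_add, Matrix.mulVec_smul, dotProduct_add,
    add_dotProduct, smul_dotProduct, dotProduct_smul, smul_eq_mul]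
  ring

lemma mdot_expand_bil {N : ℕ} (V x : Fin (N+1) → ℝ) (a : ℝ) :
    mdot (V + a • x) (V + a • x) =
      mdot V V + a * mdot V x + a * mdot x V + a * a * mdot x x := by
  rw [mdot_add_left, mdot_add_right, mdot_add_right, mdot_smul_left, mdot_smul_right,
    mdot_smul_right, mdot_smul_left]
  ring

/-- Key pointwise bound: for unit spacelike `x, y` orthogonal to the unit timelike `V`,
`|T(x,y)| ≤ T(V,V)`. -/
lemma key_bound {N : ℕ} {T : Matrix (Fin (N+1)) (Fin (N+1)) ℝ} (hdec : DEC T)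
    {V x y : Fin (N+1) → ℝ} (hV : FDTimelike V) (hVnorm : mdot V V = -1)
    (hx1 : mdot V x = 0) (hx2 : mdot x x = 1)
    (hy1 : mdot V y = 0) (hy2 : mdot y y = 1) :
    |Tbil T x y| ≤ Tbil T V V := by
  have causal : ∀ (a : ℝ) (z : Fin (N+1) → ℝ), a * a = 1 → mdot V z = 0 → mdot z z = 1 →
      FDCausal (V + a • z) := by
    intro a z ha hz1 hz2
    apply fdcausal_of_mdot_neg hV
    · rw [mdot_expand_bil, hVnorm, hz1, mdot_symm z V, hz1, hz2, ha]; norm_num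
    · rw [mdot_add_right, mdot_smul_right, hVnorm, hz1]; norm_num
  have h1 : (1:ℝ) * 1 = 1 := by norm_num
  have h2 : (-1:ℝ) * -1 = 1 := by norm_num
  have hpp := Tbil_nonneg_of_causal hdec (causal 1 x h1 hx1 hx2) (causal 1 y h1 hy1 hy2)
  have hpm := Tbil_nonneg_of_causal hdec (causal 1 x h1 hx1 hx2) (causal (-1) y h2 hy1 hy2)
  have hmp := Tbil_nonneg_of_causal hdec (causal (-1) x h2 hx1 hx2) (causal 1 y h1 hy1 hy2)
  have hmm := Tbil_nonneg_of_causal hdec (causal (-1) x h2 hx1 hx2) (causal (-1) y h2 hy1 hy2)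
  rw [Tbil_expand] at hpp hpm hmp hmm
  rw [abs_le]
  constructor <;> nlinarith [hpp, hpm, hmp, hmm]

set_option linter.unusedSectionVars false
section VMV
variable {n : Type*} [Fintype n] [DecidableEq n]

lemma vmv_mul (a b : n → ℝ) (M : Matrix n n ℝ) :
    vecMulVec a b * M = vecMulVec a (b ᵥ* M) := by
  ext i j
  simp [Matrix.mul_apply, vecMulVec_apply, Matrix.vecMul, dotProduct,
    Finset.mul_sum, mul_assoc]

lemma mul_vmv (M : Matrix n n ℝ) (a b : n → ℝ) :
    M * vecMulVec a b = vecMulVec (M *ᵥ a) b := by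
  ext i j
  simp only [Matrix.mul_apply, vecMulVec_apply, Matrix.mulVec, dotProduct,
    Finset.sum_mul, mul_assoc]

lemma vmv_mul_vmv (a b c d : n → ℝ) :
    vecMulVec a b * vecMulVec c d = (b ⬝ᵥ c) • vecMulVec a d := by
  rw [vmv_mul]
  ext i j
  simp only [vecMulVec_apply, Matrix.smul_apply, Matrix.vecMul, dotProduct,
    smul_eq_mul, Finset.sum_mul]
  rw [Finset.mul_sum]
  exact Finset.sum_congr rfl (fun k _ => by ring)

lemma vmv_transpose (a b : n → ℝ) : (vecMulVec a b)ᵀ = vecMulVec b a := by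
  ext i j; simp [vecMulVec_apply, Matrix.transpose_apply, mul_comm]

lemma vmv_mulVec (a b x : n → ℝ) : vecMulVec a b *ᵥ x = (b ⬝ᵥ x) • a := by
  ext i
  simp [Matrix.mulVec, vecMulVec_apply, dotProduct, Finset.mul_sum, mul_assoc,
    Pi.smul_apply, smul_eq_mul]
  rw [Finset.sum_mul]
  exact Finset.sum_congr rfl (fun k _ => by ring)

lemma dot_mulVec_left {n : Type*} [Fintype n] (A : Matrix n n ℝ) (x z : n → ℝ) :
    (A *ᵥ x) ⬝ᵥ z = x ⬝ᵥ (Aᵀ *ᵥ z) := by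
  rw [Matrix.dotProduct_mulVec, Matrix.vecMul_transpose, dotProduct_comm]

end VMV

section Frame

variable {N : ℕ} (V : Fin (N+1) → ℝ)

/-- The Euclidean metric adapted to `V`. -/
noncomputable def Gmat : Matrix (Fin (N+1)) (Fin (N+1)) ℝ :=
  eta N + (2:ℝ) • vecMulVec ((eta N) *ᵥ V) ((eta N) *ᵥ V)

noncomputable def Ginv : Matrix (Fin (N+1)) (Fin (N+1)) ℝ :=
  eta N + (2:ℝ) • vecMulVec V V

lemma eta_mulVec_eta {N : ℕ} (x : Fin (N+1) → ℝ) : (eta N) *ᵥ ((eta N) *ᵥ x) = x := by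
  rw [Matrix.mulVec_mulVec, eta_mul_eta, Matrix.one_mulVec]

lemma etaV_dot (x : Fin (N+1) → ℝ) : ((eta N) *ᵥ V) ⬝ᵥ x = mdot V x := by
  rw [dotProduct_comm, mdot, Matrix.dotProduct_mulVec, ← Matrix.mulVec_transpose,
    eta_transpose, dotProduct_comm]

lemma dot_etaV (x : Fin (N+1) → ℝ) : x ⬝ᵥ ((eta N) *ᵥ x) = mdot x x := rfl

lemma etaV_vecMul_eta : ((eta N) *ᵥ V) ᵥ* (eta N) = V := by
  rw [← eta_transpose N, Matrix.vecMul_transpose, eta_transpose, eta_mulVec_eta]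

lemma Gmat_mul_Ginv (hVnorm : mdot V V = -1) : Gmat V * Ginv V = 1 := by
  rw [Gmat, Ginv, Matrix.add_mul, Matrix.mul_add, Matrix.mul_add, eta_mul_eta,
    Matrix.smul_mul, Matrix.mul_smul, Matrix.smul_mul, Matrix.mul_smul,
    mul_vmv, vmv_mul, vmv_mul_vmv, etaV_vecMul_eta, etaV_dot, hVnorm]
  ext i j
  simp [vecMulVec_apply, Matrix.add_apply, Matrix.smul_apply]
  ring

lemma Gmat_transpose : (Gmat V)ᵀ = Gmat V := by
  rw [Gmat, Matrix.transpose_add, eta_transpose, Matrix.transpose_smul, vmv_transpose]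

lemma Ginv_transpose : (Ginv V)ᵀ = Ginv V := by
  rw [Ginv, Matrix.transpose_add, eta_transpose, Matrix.transpose_smul, vmv_transpose]

lemma Ginv_mul_Gmat (hVnorm : mdot V V = -1) : Ginv V * Gmat V = 1 :=
  mul_eq_one_comm.mp (Gmat_mul_Ginv V hVnorm)

/-- The quadratic form of `Gmat` in `mdot` terms. -/
lemma Gmat_quadform (x : Fin (N+1) → ℝ) :
    x ⬝ᵥ (Gmat V *ᵥ x) = mdot x x + 2 * (mdot V x)^2 := by
  rw [Gmat, Matrix.add_mulVec, dotProduct_add, Matrix.smul_mulVec,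
    dotProduct_smul, vmv_mulVec, etaV_dot, dotProduct_smul, dot_etaV,
    dotProduct_comm, etaV_dot]
  simp [smul_eq_mul]
  ring

lemma mdot_nonneg_of_orth {V : Fin (N+1) → ℝ} (hV : FDTimelike V) {z : Fin (N+1) → ℝ}
    (hz : mdot V z = 0) : 0 ≤ mdot z z := by
  have hV0 : 0 < V 0 := hV.2
  have hVs : ∑ i : Fin N, V i.succ * V i.succ ≤ V 0 * V 0 := by
    have := hV.1; rw [mdot_expand] at this; linarith
  rw [mdot_expand] at hz ⊢
  have hcs : (∑ i : Fin N, V i.succ * z i.succ)^2 ≤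
      (∑ i : Fin N, V i.succ * V i.succ) * (∑ i : Fin N, z i.succ * z i.succ) := by
    simpa [sq] using Finset.sum_mul_sq_le_sq_mul_sq Finset.univ
      (fun i : Fin N => V i.succ) (fun i : Fin N => z i.succ)
  have hzz : (0:ℝ) ≤ ∑ i : Fin N, z i.succ * z i.succ :=
    Finset.sum_nonneg (fun i _ => mul_self_nonneg _)
  have hS : ∑ i : Fin N, V i.succ * z i.succ = V 0 * z 0 := by linarith
  rw [hS] at hcs
  nlinarith [mul_pos hV0 hV0, mul_le_mul_of_nonneg_right hVs hzz]

lemma Gmat_posSemidef (hV : FDTimelike V) (hVnorm : mdot V V = -1) :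
    (Gmat V).PosSemidef := by
  refine Matrix.PosSemidef.of_dotProduct_mulVec_nonneg ?_ ?_
  · ext i j
    simp only [Matrix.conjTranspose_apply, star_trivial]
    exact congrFun (congrFun (Gmat_transpose V) i) j
  · intro x
    simp only [star_trivial]
    rw [Gmat_quadform]
    set a := mdot V x with ha
    have h1 : mdot V (x + a • V) = 0 := by
      rw [mdot_add_right, mdot_smul_right, hVnorm]; ring
    have h2 := mdot_nonneg_of_orth hV h1
    have h3 : mdot (x + a • V) (x + a • V) = mdot x x + a^2 := by
      rw [mdot_expand_bil, hVnorm, mdot_symm x V, ← ha]; ring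
    nlinarith [h2, h3]

lemma eta_conjTranspose (N : ℕ) : (eta N)ᴴ = eta N := by
  ext i j
  simp only [Matrix.conjTranspose_apply, star_trivial]
  exact congrFun (congrFun (eta_transpose N) i) j

lemma Ginv_eq_conj : Ginv V = (eta N)ᴴ * Gmat V * (eta N) := by
  rw [eta_conjTranspose, Gmat, Matrix.mul_add, Matrix.add_mul, eta_mul_eta, Matrix.one_mul,
    Matrix.mul_smul, Matrix.smul_mul, mul_vmv, vmv_mul, eta_mulVec_eta, etaV_vecMul_eta, Ginv]

lemma Ginv_posSemidef (hV : FDTimelike V) (hVnorm : mdot V V = -1) :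
    (Ginv V).PosSemidef := by
  rw [Ginv_eq_conj]
  exact (Gmat_posSemidef V hV hVnorm).conjTranspose_mul_mul_same (eta N)

end Frame

section House

variable {N : ℕ}

noncomputable def e0 (N : ℕ) : Fin (N+1) → ℝ := Pi.single 0 1

/-- Householder reflection sending `e0` to `u`. -/
noncomputable def House (u : Fin (N+1) → ℝ) : Matrix (Fin (N+1)) (Fin (N+1)) ℝ :=
  if u = e0 N then 1 else
    (1 : Matrix (Fin (N+1)) (Fin (N+1)) ℝ) -
      (2 / ((e0 N - u) ⬝ᵥ (e0 N - u))) • vecMulVec (e0 N - u) (e0 N - u)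

lemma e0_dot_e0 : (e0 N) ⬝ᵥ (e0 N) = 1 := by
  simp [e0, single_dotProduct]

lemma e0_dot (u : Fin (N+1) → ℝ) : (e0 N) ⬝ᵥ u = u 0 := by
  simp [e0, single_dotProduct]

lemma dot_e0 (u : Fin (N+1) → ℝ) : u ⬝ᵥ (e0 N) = u 0 := by
  simp [e0, dotProduct_single]

lemma z_dot_z {u : Fin (N+1) → ℝ} (hu : u ⬝ᵥ u = 1) :
    (e0 N - u) ⬝ᵥ (e0 N - u) = 2 * (1 - u 0) := by
  rw [dotProduct_sub, sub_dotProduct, sub_dotProduct,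
    e0_dot_e0, e0_dot, dot_e0, hu]
  ring

lemma u0_ne_one {u : Fin (N+1) → ℝ} (hu : u ⬝ᵥ u = 1) (hne : u ≠ e0 N) : u 0 ≠ 1 := by
  intro h0
  apply hne
  have hsum : u 0 * u 0 + ∑ i : Fin N, u i.succ * u i.succ = 1 := by
    rw [← hu, dotProduct]
    rw [Fin.sum_univ_succ]
  rw [h0] at hsum
  have hzero : ∑ i : Fin N, u i.succ * u i.succ = 0 := by linarith
  have hall : ∀ i : Fin N, u i.succ = 0 := by
    intro i
    have := (Finset.sum_eq_zero_iff_of_nonneg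
      (fun j _ => mul_self_nonneg (u j.succ))).mp hzero i (Finset.mem_univ i)
    exact mul_self_eq_zero.mp this
  funext i
  refine Fin.cases ?_ ?_ i
  · simpa [e0] using h0
  · intro j
    simp [e0, hall j, Pi.single, Function.update, (Fin.succ_ne_zero j)]

lemma House_transpose (u : Fin (N+1) → ℝ) : (House u)ᵀ = House u := by
  rw [House]
  split_ifs with h
  · exact Matrix.transpose_one
  · rw [Matrix.transpose_sub, Matrix.transpose_one, Matrix.transpose_smul, vmv_transpose]

lemma House_mul_House {u : Fin (N+1) → ℝ} (hu : u ⬝ᵥ u = 1) : House u * House u = 1 := by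
  rw [House]
  split_ifs with h
  · exact Matrix.one_mul 1
  · have hz : (e0 N - u) ⬝ᵥ (e0 N - u) = 2 * (1 - u 0) := z_dot_z hu
    have hzne : (e0 N - u) ⬝ᵥ (e0 N - u) ≠ 0 := by
      rw [hz]
      have := u0_ne_one hu h
      intro hc
      apply this
      linarith [mul_left_cancel₀ (two_ne_zero (α := ℝ)) (by linarith : (2:ℝ) * (1 - u 0) = 2 * 0)]
    set c := 2 / ((e0 N - u) ⬝ᵥ (e0 N - u)) with hc
    rw [Matrix.sub_mul, Matrix.mul_sub, Matrix.mul_sub, Matrix.one_mul, Matrix.mul_one,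
      Matrix.smul_mul, Matrix.one_mul, Matrix.mul_smul, vmv_mul_vmv, smul_smul, smul_smul]
    have key : ∀ zz : ℝ, zz ≠ 0 → 2/zz * (2/zz) * zz = 2/zz + 2/zz := by
      intro zz hzz; field_simp; ring
    have hcc : c * c * ((e0 N - u) ⬝ᵥ (e0 N - u)) = c + c := by
      rw [hc]; exact key _ hzne
    rw [hcc, add_smul]
    abel

lemma House_mulVec_e0 {u : Fin (N+1) → ℝ} (hu : u ⬝ᵥ u = 1) : House u *ᵥ e0 N = u := by
  rw [House]
  split_ifs with h
  · rw [Matrix.one_mulVec, h]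
  · have hz : (e0 N - u) ⬝ᵥ (e0 N - u) = 2 * (1 - u 0) := z_dot_z hu
    have h0 : u 0 ≠ 1 := u0_ne_one hu h
    rw [Matrix.sub_mulVec, Matrix.one_mulVec, Matrix.smul_mulVec, vmv_mulVec, dot_e0]
    have : (e0 N - u) 0 = 1 - u 0 := by simp [e0]
    rw [this, smul_smul]
    have hne2 : (2:ℝ) * (1 - u 0) ≠ 0 := by
      intro hcon
      rcases mul_eq_zero.mp hcon with h2 | h1
      · norm_num at h2
      · exact h0 (by linarith)
    have hcoef : 2 / (2 * (1 - u 0)) * (1 - u 0) = 1 := by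
      field_simp
    rw [hz, hcoef, one_smul]
    abel

end House

section FrameExists

variable {N : ℕ}

lemma Gmat_bil (V x y : Fin (N+1) → ℝ) :
    x ⬝ᵥ (Gmat V *ᵥ y) = mdot x y + 2 * (mdot V x) * (mdot V y) := by
  rw [Gmat, Matrix.add_mulVec, dotProduct_add, Matrix.smul_mulVec,
    dotProduct_smul, vmv_mulVec, etaV_dot, dotProduct_smul]
  have h1 : x ⬝ᵥ ((eta N) *ᵥ y) = mdot x y := rfl
  have h2 : x ⬝ᵥ ((eta N) *ᵥ V) = mdot V x := by
    rw [← etaV_dot V x, dotProduct_comm]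
  rw [h1, h2]
  simp [smul_eq_mul]
  ring

lemma exists_frame (V : Fin (N+1) → ℝ) (hV : FDTimelike V) (hVnorm : mdot V V = -1) :
    ∃ S : Matrix (Fin (N+1)) (Fin (N+1)) ℝ,
      S * Sᵀ = Ginv V ∧ S *ᵥ (e0 N) = V ∧ Sᵀ * Gmat V * S = 1 := by
  have hpsd := Ginv_posSemidef V hV hVnorm
  obtain ⟨B, hB2, hBt⟩ : ∃ B : Matrix (Fin (N+1)) (Fin (N+1)) ℝ,
      B * B = Ginv V ∧ Bᵀ = B := by
    open scoped MatrixOrder in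
    refine ⟨CFC.sqrt (Ginv V), CFC.sqrt_mul_sqrt_self (Ginv V) hpsd.nonneg, ?_⟩
    open scoped MatrixOrder in
    have h := (CFC.sqrt_nonneg (Ginv V)).posSemidef.isHermitian
    rwa [Matrix.IsHermitian, Matrix.conjTranspose_eq_transpose_of_trivial] at h
  set u := (B * Gmat V) *ᵥ V with hudef
  have hBu : B *ᵥ u = V := by
    rw [hudef, Matrix.mulVec_mulVec, ← Matrix.mul_assoc, hB2, Ginv_mul_Gmat V hVnorm,
      Matrix.one_mulVec]
  have huu : u ⬝ᵥ u = 1 := by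
    rw [hudef, dot_mulVec_left]
    rw [Matrix.transpose_mul, hBt, Gmat_transpose, Matrix.mulVec_mulVec]
    have : Gmat V * B * (B * Gmat V) = Gmat V := by
      rw [Matrix.mul_assoc, ← Matrix.mul_assoc B B, hB2, ← Matrix.mul_assoc,
        Matrix.mul_assoc (Gmat V), Ginv_mul_Gmat V hVnorm, Matrix.mul_one]
    rw [this, Gmat_bil, hVnorm]
    ring
  refine ⟨B * House u, ?_, ?_, ?_⟩
  · rw [Matrix.transpose_mul, House_transpose, hBt, Matrix.mul_assoc,
      ← Matrix.mul_assoc (House u), House_mul_House huu, Matrix.one_mul, hB2]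
  · rw [← Matrix.mulVec_mulVec, House_mulVec_e0 huu, hBu]
  · have hBGB : B * Gmat V * B = 1 := by
      have h1 : B * (B * Gmat V) = 1 := by
        rw [← Matrix.mul_assoc, hB2, Ginv_mul_Gmat V hVnorm]
      exact mul_eq_one_comm.mp h1
    rw [Matrix.transpose_mul, House_transpose, hBt]
    calc House u * B * Gmat V * (B * House u)
        = House u * (B * Gmat V * B) * House u := by
          simp only [Matrix.mul_assoc]
      _ = House u * House u := by rw [hBGB, Matrix.mul_one]
      _ = 1 := House_mul_House huu

end FrameExists

section Main

lemma vmv_zero_left {n : Type*} (b : n → ℝ) : vecMulVec (0 : n → ℝ) b = 0 := by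
  ext i j; simp [vecMulVec_apply]

lemma vmv_zero_right {n : Type*} (a : n → ℝ) : vecMulVec a (0 : n → ℝ) = 0 := by
  ext i j; simp [vecMulVec_apply]

lemma contract_eq_trace {n : Type*} [Fintype n] (A B : Matrix n n ℝ) :
    ∑ μ, ∑ ν, A μ ν * B μ ν = (A * Bᵀ).trace := by
  simp [Matrix.trace, Matrix.diag, Matrix.mul_apply]

lemma conj_entry {n : Type*} [Fintype n] [DecidableEq n] (S M : Matrix n n ℝ) (a b : n) :
    (Sᵀ * M * S) a b = (S *ᵥ Pi.single a 1) ⬝ᵥ (M *ᵥ (S *ᵥ Pi.single b 1)) := by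
  rw [dot_mulVec_left, Matrix.mulVec_mulVec, Matrix.mulVec_mulVec,
    single_dotProduct, Matrix.mulVec_single]
  simp [Matrix.mul_assoc]

theorem dec_ineq_three' {N : ℕ} (hN : 1 ≤ N)
    (T : Matrix (Fin (N+1)) (Fin (N+1)) ℝ) (hsymm : T.IsSymm)
    (hdec : DEC T)
    (V : Fin (N+1) → ℝ) (hV : FDTimelike V) (hVnorm : mdot V V = -1)
    (D : Matrix (Fin (N+1)) (Fin (N+1)) ℝ)
    (hD1 : ∀ y : Fin (N+1) → ℝ, V ⬝ᵥ D.mulVec y = 0)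
    (hD2 : ∀ x : Fin (N+1) → ℝ, x ⬝ᵥ D.mulVec V = 0) :
    |∑ μ, ∑ ν, (eta N * T * eta N) μ ν * D μ ν| ≤
      (N : ℝ)^2 * Real.sqrt (∑ α, ∑ β, D α β * (eta N * D * eta N) α β) *
        Tbil T V V := by
  obtain ⟨S, hSS, hSe0, hSGS⟩ := exists_frame V hV hVnorm
  -- D annihilates V on both sides
  have hDV : D *ᵥ V = 0 := by
    funext i
    have h := hD2 (Pi.single i 1)
    rw [single_dotProduct, one_mul] at h
    simpa using h
  have hDtV : Dᵀ *ᵥ V = 0 := by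
    funext j
    have h := hD1 (Pi.single j 1)
    rw [Matrix.mulVec_single] at h
    simpa [Matrix.mulVec, dotProduct, Matrix.transpose_apply, mul_comm] using h
  set T2 := Sᵀ * T * S with hT2def
  set D2 := Sᵀ * D * S with hD2def
  have hD2t : D2ᵀ = Sᵀ * Dᵀ * S := by
    rw [hD2def, Matrix.transpose_mul, Matrix.transpose_mul, Matrix.transpose_transpose]
    simp only [Matrix.mul_assoc]
  -- Ginv absorption lemmas
  have habs1 : Dᵀ * Ginv V = Dᵀ * eta N := by
    rw [Ginv, Matrix.mul_add, Matrix.mul_smul, mul_vmv, hDtV, vmv_zero_left, smul_zero,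
      add_zero]
  have habs2 : Ginv V * Dᵀ = eta N * Dᵀ := by
    rw [Ginv, Matrix.add_mul, Matrix.smul_mul, vmv_mul, Matrix.vecMul_transpose, hDV,
      vmv_zero_right, smul_zero, add_zero]
  -- the T-contraction identity
  have htrace1 : ∑ μ, ∑ ν, (eta N * T * eta N) μ ν * D μ ν = ∑ μ, ∑ ν, T2 μ ν * D2 μ ν := by
    rw [contract_eq_trace, contract_eq_trace]
    have e1 : T2 * D2ᵀ = Sᵀ * (T * S * Sᵀ * Dᵀ * S) := by
      rw [hD2t, hT2def]; simp only [Matrix.mul_assoc]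
    rw [e1, Matrix.trace_mul_comm Sᵀ (T * S * Sᵀ * Dᵀ * S)]
    have e2 : T * S * Sᵀ * Dᵀ * S * Sᵀ = T * eta N * (Dᵀ * eta N) := by
      calc T * S * Sᵀ * Dᵀ * S * Sᵀ = T * (S * Sᵀ) * (Dᵀ * (S * Sᵀ)) := by
            simp only [Matrix.mul_assoc]
        _ = T * Ginv V * (Dᵀ * Ginv V) := by rw [hSS]
        _ = T * (Ginv V * Dᵀ) * Ginv V := by simp only [Matrix.mul_assoc]
        _ = T * (eta N * Dᵀ) * Ginv V := by rw [habs2]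
        _ = T * eta N * (Dᵀ * Ginv V) := by simp only [Matrix.mul_assoc]
        _ = T * eta N * (Dᵀ * eta N) := by rw [habs1]
    rw [e2, show T * eta N * (Dᵀ * eta N) = T * eta N * Dᵀ * eta N by
      simp only [Matrix.mul_assoc], Matrix.trace_mul_comm (T * eta N * Dᵀ) (eta N)]
    simp only [Matrix.mul_assoc]
  -- the D-contraction identity
  have htrace2 : ∑ α, ∑ β, D α β * (eta N * D * eta N) α β = ∑ μ, ∑ ν, D2 μ ν * D2 μ ν := by
    rw [contract_eq_trace, contract_eq_trace]
    have hDet : (eta N * D * eta N)ᵀ = eta N * (Dᵀ * eta N) := by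
      rw [Matrix.transpose_mul, Matrix.transpose_mul, eta_transpose]
    have e1 : D2 * D2ᵀ = Sᵀ * (D * S * Sᵀ * Dᵀ * S) := by
      rw [hD2t, hD2def]; simp only [Matrix.mul_assoc]
    rw [hDet, e1, Matrix.trace_mul_comm Sᵀ (D * S * Sᵀ * Dᵀ * S)]
    have e2 : D * S * Sᵀ * Dᵀ * S * Sᵀ = D * eta N * (Dᵀ * eta N) := by
      calc D * S * Sᵀ * Dᵀ * S * Sᵀ = D * (S * Sᵀ) * (Dᵀ * (S * Sᵀ)) := by
            simp only [Matrix.mul_assoc]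
        _ = D * Ginv V * (Dᵀ * Ginv V) := by rw [hSS]
        _ = D * (Ginv V * Dᵀ) * Ginv V := by simp only [Matrix.mul_assoc]
        _ = D * (eta N * Dᵀ) * Ginv V := by rw [habs2]
        _ = D * eta N * (Dᵀ * Ginv V) := by simp only [Matrix.mul_assoc]
        _ = D * eta N * (Dᵀ * eta N) := by rw [habs1]
    rw [e2]
    simp only [Matrix.mul_assoc]
  -- zero row and column of D2
  have hD2col : ∀ μ, D2 μ 0 = 0 := by
    intro μ
    have hcol : D2 *ᵥ (e0 N) = 0 := by
      rw [hD2def, ← Matrix.mulVec_mulVec, ← Matrix.mulVec_mulVec, hSe0, hDV,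
        Matrix.mulVec_zero]
    have : (D2 *ᵥ (e0 N)) μ = D2 μ 0 := by
      simp [e0, Matrix.mulVec_single]
    rw [← this, hcol, Pi.zero_apply]
  have hD2row : ∀ ν, D2 0 ν = 0 := by
    intro ν
    have hrow : D2ᵀ *ᵥ (e0 N) = 0 := by
      rw [hD2t, ← Matrix.mulVec_mulVec, ← Matrix.mulVec_mulVec, hSe0, hDtV,
        Matrix.mulVec_zero]
    have : (D2ᵀ *ᵥ (e0 N)) ν = D2 0 ν := by
      simp [e0, Matrix.mulVec_single, Matrix.transpose_apply]
    rw [← this, hrow, Pi.zero_apply]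
  -- orthonormal frame columns
  have horth : ∀ a b : Fin (N+1),
      mdot (S *ᵥ Pi.single a 1) (S *ᵥ Pi.single b 1) +
        2 * mdot V (S *ᵥ Pi.single a 1) * mdot V (S *ᵥ Pi.single b 1) =
        (1 : Matrix (Fin (N+1)) (Fin (N+1)) ℝ) a b := by
    intro a b
    have h := conj_entry S (Gmat V) a b
    rw [hSGS] at h
    rw [← h.symm] at *
    rw [← Gmat_bil V, ← h]
  have hs0 : S *ᵥ Pi.single 0 1 = V := hSe0
  have hVs : ∀ i : Fin N, mdot V (S *ᵥ Pi.single i.succ 1) = 0 := by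
    intro i
    have h := horth 0 i.succ
    rw [hs0, hVnorm, Matrix.one_apply_ne (Fin.succ_ne_zero i).symm] at h
    linarith
  have hss : ∀ i : Fin N, mdot (S *ᵥ Pi.single i.succ 1) (S *ᵥ Pi.single i.succ 1) = 1 := by
    intro i
    have h := horth i.succ i.succ
    rw [hVs i, Matrix.one_apply_eq] at h
    linarith
  -- entry bound for T2
  have hTb : ∀ i j : Fin N, |T2 i.succ j.succ| ≤ Tbil T V V := by
    intro i j
    have h := conj_entry S T i.succ j.succ
    rw [hT2def]
    rw [h]
    exact key_bound hdec hV hVnorm (hVs i) (hss i) (hVs j) (hss j)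
  -- split off the zero parts of the sums
  have hsum1 : ∑ μ, ∑ ν, T2 μ ν * D2 μ ν =
      ∑ i : Fin N, ∑ j : Fin N, T2 i.succ j.succ * D2 i.succ j.succ := by
    rw [Fin.sum_univ_succ]
    rw [Finset.sum_eq_zero (fun ν _ => by rw [hD2row ν, mul_zero]), zero_add]
    refine Finset.sum_congr rfl fun i _ => ?_
    rw [Fin.sum_univ_succ, hD2col i.succ, mul_zero, zero_add]
  have hsum2 : ∑ μ, ∑ ν, D2 μ ν * D2 μ ν =
      ∑ i : Fin N, ∑ j : Fin N, D2 i.succ j.succ * D2 i.succ j.succ := by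
    rw [Fin.sum_univ_succ]
    rw [Finset.sum_eq_zero (fun ν _ => by rw [hD2row ν, mul_zero]), zero_add]
    refine Finset.sum_congr rfl fun i _ => ?_
    rw [Fin.sum_univ_succ, hD2col i.succ, mul_zero, zero_add]
  -- numerics
  set c := Tbil T V V with hcdef
  have hc0 : 0 ≤ c := Tbil_nonneg_of_causal hdec (Or.inl hV) (Or.inl hV)
  set A2 := ∑ i : Fin N, ∑ j : Fin N, D2 i.succ j.succ * D2 i.succ j.succ with hA2def
  have hA2nn : 0 ≤ A2 :=
    Finset.sum_nonneg fun i _ => Finset.sum_nonneg fun j _ => mul_self_nonneg _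
  have habsd : |∑ i : Fin N, ∑ j : Fin N, T2 i.succ j.succ * D2 i.succ j.succ| ≤
      c * ∑ i : Fin N, ∑ j : Fin N, |D2 i.succ j.succ| := by
    calc |∑ i : Fin N, ∑ j : Fin N, T2 i.succ j.succ * D2 i.succ j.succ|
        ≤ ∑ i : Fin N, |∑ j : Fin N, T2 i.succ j.succ * D2 i.succ j.succ| :=
          Finset.abs_sum_le_sum_abs _ _
      _ ≤ ∑ i : Fin N, ∑ j : Fin N, |T2 i.succ j.succ * D2 i.succ j.succ| :=
          Finset.sum_le_sum fun i _ => Finset.abs_sum_le_sum_abs _ _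
      _ ≤ ∑ i : Fin N, ∑ j : Fin N, c * |D2 i.succ j.succ| := by
          refine Finset.sum_le_sum fun i _ => Finset.sum_le_sum fun j _ => ?_
          rw [abs_mul]
          exact mul_le_mul_of_nonneg_right (hTb i j) (abs_nonneg _)
      _ = c * ∑ i : Fin N, ∑ j : Fin N, |D2 i.succ j.succ| := by
          rw [Finset.mul_sum]
          exact Finset.sum_congr rfl fun i _ => (Finset.mul_sum _ _ _).symm
  have hCS : (∑ i : Fin N, ∑ j : Fin N, |D2 i.succ j.succ|)^2 ≤ (N:ℝ)^2 * A2 := by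
    have h := Finset.sum_mul_sq_le_sq_mul_sq (Finset.univ : Finset (Fin N × Fin N))
      (fun p : Fin N × Fin N => |D2 p.1.succ p.2.succ|) (fun _ => (1:ℝ))
    simp only [mul_one, one_pow, sq_abs] at h
    rw [Fintype.sum_prod_type, Fintype.sum_prod_type] at h
    have hcard : ∑ _p : Fin N × Fin N, (1:ℝ) = (N:ℝ)^2 := by
      simp [Finset.sum_const, Finset.card_univ]
      ring
    rw [hcard] at h
    calc (∑ i : Fin N, ∑ j : Fin N, |D2 i.succ j.succ|)^2
        ≤ (∑ i : Fin N, ∑ j : Fin N, D2 i.succ j.succ ^ 2) * (N:ℝ)^2 := h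
      _ = (N:ℝ)^2 * A2 := by
          rw [mul_comm, hA2def]
          congr 1
          exact Finset.sum_congr rfl fun i _ => Finset.sum_congr rfl fun j _ => by ring
  have hdle : ∑ i : Fin N, ∑ j : Fin N, |D2 i.succ j.succ| ≤ (N:ℝ) * Real.sqrt A2 := by
    have hnn : 0 ≤ ∑ i : Fin N, ∑ j : Fin N, |D2 i.succ j.succ| :=
      Finset.sum_nonneg fun i _ => Finset.sum_nonneg fun j _ => abs_nonneg _
    calc ∑ i : Fin N, ∑ j : Fin N, |D2 i.succ j.succ|
        = Real.sqrt ((∑ i : Fin N, ∑ j : Fin N, |D2 i.succ j.succ|)^2) :=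
          (Real.sqrt_sq hnn).symm
      _ ≤ Real.sqrt ((N:ℝ)^2 * A2) := Real.sqrt_le_sqrt hCS
      _ = (N:ℝ) * Real.sqrt A2 := by
          rw [Real.sqrt_mul (sq_nonneg _), Real.sqrt_sq (Nat.cast_nonneg N)]
  -- put everything together
  rw [htrace1, htrace2, hsum1, hsum2]
  calc |∑ i : Fin N, ∑ j : Fin N, T2 i.succ j.succ * D2 i.succ j.succ|
      ≤ c * ∑ i : Fin N, ∑ j : Fin N, |D2 i.succ j.succ| := habsd
    _ ≤ c * ((N:ℝ) * Real.sqrt A2) := mul_le_mul_of_nonneg_left hdle hc0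
    _ ≤ (N:ℝ)^2 * Real.sqrt A2 * c := by
        have hN1 : (1:ℝ) ≤ (N:ℝ) := by exact_mod_cast hN
        have hNle : (N:ℝ) ≤ (N:ℝ)^2 := by nlinarith
        have hs := Real.sqrt_nonneg A2
        have key : (0:ℝ) ≤ ((N:ℝ)^2 - (N:ℝ)) * (Real.sqrt A2 * c) :=
          mul_nonneg (by linarith) (mul_nonneg hs hc0)
        nlinarith [key]

/-- Inequality (3): `|T^{μν} D_{μν}| ≤ N² √(D_{αβ}D^{αβ}) T(V,V)` for a
bilinear form `D` whose contractions with the unit timelike `V` vanish. -/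
theorem dec_ineq_three {N : ℕ} (hN : 1 ≤ N)
    (T : Matrix (Fin (N+1)) (Fin (N+1)) ℝ) (hsymm : T.IsSymm)
    (hdec : DEC T)
    (V : Fin (N+1) → ℝ) (hV : FDTimelike V) (hVnorm : mdot V V = -1)
    (D : Matrix (Fin (N+1)) (Fin (N+1)) ℝ)
    (hD1 : ∀ y : Fin (N+1) → ℝ, V ⬝ᵥ D.mulVec y = 0)
    (hD2 : ∀ x : Fin (N+1) → ℝ, x ⬝ᵥ D.mulVec V = 0) :
    |∑ μ, ∑ ν, (eta N * T * eta N) μ ν * D μ ν| ≤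
      (N : ℝ)^2 * Real.sqrt (∑ α, ∑ β, D α β * (eta N * D * eta N) α β) *
        Tbil T V V :=
  dec_ineq_three' hN T hsymm hdec V hV hVnorm D hD1 hD2
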